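/- Let K be a clique complex with facets F_1,...,F_n, and let {i_1,...,i_ℓ} ⊆ [n]. Then the set ⋃_{J ⊆ {i_1,...,i_ℓ}, |J| = ℓ−1} (⋂_{k ∈ J} F_k) is a face of K. -/
import Mathlib


/-- if `K` is a clique (flag) complex with facets `F 1, …, F n` and `s` is a
set of at least three facet indices, then the union over all `(|s|−1)`-element subsets `J`
of `s` of the intersections `⋂_{k ∈ J} F k` is a face of `K`. -/
theorem stmt7 {V : Type*} [DecidableEq V] (n : ℕ) (K : Set (Finset V))
    (hdown : ∀ s ∈ K, ∀ t ⊆ s, t ∈ K)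
    (F : Fin n → Finset V)
    (hfacet : ∀ i, F i ∈ K)
    (hcover : ∀ s ∈ K, ∃ i, s ⊆ F i)
    (hmax : ∀ i, ∀ s ∈ K, F i ⊆ s → s = F i)
    (hflag : ∀ A : Finset V, (∀ a ∈ A, ∀ b ∈ A, ({a, b} : Finset V) ∈ K) → A ∈ K)
    (s : Finset (Fin n)) (hs : 3 ≤ s.card) :
    ∃ t ∈ K, ∀ v : V,
      v ∈ t ↔ ∃ J ∈ s.powersetCard (s.card - 1), ∀ k ∈ J, v ∈ F k := by
  classical
  set P : V → Prop := fun v => ∃ J ∈ s.powersetCard (s.card - 1), ∀ k ∈ J, v ∈ F k with hP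
  set t : Finset V := (s.sup F).filter P with ht
  have hmem : ∀ v, v ∈ t ↔ P v := by
    intro v
    simp only [ht, Finset.mem_filter, and_iff_right_iff_imp]
    rintro ⟨J, hJ, hv⟩
    rw [Finset.mem_powersetCard] at hJ
    have hJne : J.Nonempty := by
      rw [← Finset.card_pos, hJ.2]
      omega
    obtain ⟨k, hk⟩ := hJne
    exact Finset.mem_sup.2 ⟨k, hJ.1 hk, hv k hk⟩
  refine ⟨t, ?_, hmem⟩
  apply hflag
  intro a ha b hb
  obtain ⟨J1, hJ1, ha1⟩ := (hmem a).1 ha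
  obtain ⟨J2, hJ2, hb2⟩ := (hmem b).1 hb
  rw [Finset.mem_powersetCard] at hJ1 hJ2
  have hinter : (J1 ∩ J2).Nonempty := by
    rw [← Finset.card_pos]
    have hu : (J1 ∪ J2).card ≤ s.card :=
      Finset.card_le_card (Finset.union_subset hJ1.1 hJ2.1)
    have := Finset.card_inter_add_card_union J1 J2
    omega
  obtain ⟨k, hk⟩ := hinter
  rw [Finset.mem_inter] at hk
  apply hdown (F k) (hfacet k)
  intro x hx
  rcases Finset.mem_insert.1 hx with h | h
  · subst h; exact ha1 k hk.1
  · rw [Finset.mem_singleton] at h; subst h; exact hb2 k hk.2
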